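/- arXiv:2507.03465 — 4 statements merged into one kernel-verified Lean document; each statement's English description precedes it below -/
import Mathlib

section
/- Let Σ be a finite nonempty alphabet and let U, V ⊆ Σ* be regular languages with U nonempty such that V* is infix complete. Then there exists a word x ∈ Σ* such that μ({ζ ∈ Σ^ω : x is a prefix of ζ} \ U·V^ω) = 0, where μ is the Bernoulli measure on Σ^ω; equivalently, the conditional probability that a random ω-word lies in U·V^ω given that it has prefix x equals 1. -/
open Filter Topology MeasureTheory

namespace Sparse

variable {α : Type*}

/-- The finite word `w` is a prefix of the ω-word `ζ`. -/
def PrefixO (w : List α) (ζ : ℕ → α) : Prop :=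
  ∀ i : Fin w.length, ζ i = w.get i

/-- Concatenation `w · ζ` of a finite word with an ω-word. -/
def appendO (w : List α) (ζ : ℕ → α) : ℕ → α :=
  fun n => if h : n < w.length then w.get ⟨n, h⟩ else ζ (n - w.length)

/-- The concatenation `v 0 · v 1 · ⋯ · v (k-1)` of the first `k` words of a sequence of words. -/
def joinUpTo (v : ℕ → List α) (k : ℕ) : List α :=
  (List.ofFn (fun i : Fin k => v i)).flatten

/-- `V^ω`: the set of ω-words of the form `v₁ · v₂ · v₃ ⋯` with all `vᵢ ∈ V`.  An ω-word `ζ` is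
such an infinite concatenation iff each finite concatenation `v₁ ⋯ v_k` is a prefix of `ζ` and
the lengths of these finite concatenations tend to infinity. -/
def omegaPow (V : Set (List α)) : Set (ℕ → α) :=
  {ζ | ∃ v : ℕ → List α, (∀ i, v i ∈ V) ∧
    Tendsto (fun k => (joinUpTo v k).length) atTop atTop ∧
    ∀ k, PrefixO (joinUpTo v k) ζ}

/-- `U · V^ω = {u · v₁ · v₂ ⋯ : u ∈ U, v₁, v₂, … ∈ V}`. -/
def catOmega (U V : Set (List α)) : Set (ℕ → α) :=
  {ζ | ∃ u ∈ U, ∃ ξ ∈ omegaPow V, ζ = appendO u ξ}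

/-- An ω-word `ξ` is rich if every finite word `v` occurs as a factor of `ξ`,
i.e. `ξ = x · v · y` for some finite word `x` and ω-word `y`. -/
def Rich (ξ : ℕ → α) : Prop :=
  ∀ v : List α, ∃ (x : List α) (y : ℕ → α), ξ = appendO (x ++ v) y

/-- `V* `: the set of finite concatenations of words from `V`. -/
def star (V : Set (List α)) : Set (List α) :=
  {w | ∃ l : List (List α), (∀ v ∈ l, v ∈ V) ∧ w = l.flatten}

/-- A language of finite words is regular iff it is accepted by a DFA. -/
def RegularLang (L : Set (List α)) : Prop :=
  ∃ (σ : Type) (_ : Fintype σ) (M : DFA α σ), L = M.accepts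

/-- `L` is infix complete if every finite word occurs as an infix of a word of `L`. -/
def InfixComplete (L : Set (List α)) : Prop :=
  ∀ w : List α, ∃ x y : List α, x ++ w ++ y ∈ L


section AuxiliaryLemmas



def shift (m : ℕ) (ζ : ℕ → α) : ℕ → α := fun n => ζ (m + n)

def pref (ζ : ℕ → α) (n : ℕ) : List α := List.ofFn (fun i : Fin n => ζ i)

@[simp] lemma pref_length (ζ : ℕ → α) (n : ℕ) : (pref ζ n).length = n := by
  simp [pref]

@[simp] lemma shift_shift (a b : ℕ) (ζ : ℕ → α) : shift a (shift b ζ) = shift (b + a) ζ := by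
  funext n; simp [shift, Nat.add_assoc]

lemma prefixO_pref' (ζ : ℕ → α) (n : ℕ) : PrefixO (pref ζ n) ζ := by
  intro i
  rw [List.get_eq_getElem]
  simp [pref]

lemma prefixO_iff (w : List α) (ζ : ℕ → α) : PrefixO w ζ ↔ pref ζ w.length = w := by
  constructor
  · intro h
    apply List.ext_get (by simp)
    intro i h1 h2
    simpa [pref] using h ⟨i, h2⟩
  · intro h i
    have := h ▸ (prefixO_pref' ζ w.length)
    exact this i

lemma prefixO_pref (ζ : ℕ → α) (n : ℕ) : PrefixO (pref ζ n) ζ :=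
  prefixO_pref' ζ n

lemma pref_eq_of_prefixO {w : List α} {ζ : ℕ → α} (h : PrefixO w ζ) : pref ζ w.length = w :=
  (prefixO_iff w ζ).1 h

lemma pref_add (ζ : ℕ → α) (n m : ℕ) :
    pref ζ (n + m) = pref ζ n ++ pref (shift n ζ) m := by
  unfold pref
  rw [List.ofFn_add]
  congr 1 <;> · apply List.ext_get (by simp)
                intro i h1 h2
                simp [shift]

lemma prefixO_append {x y : List α} {ζ : ℕ → α} :
    PrefixO (x ++ y) ζ ↔ PrefixO x ζ ∧ PrefixO y (shift x.length ζ) := by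
  rw [prefixO_iff, prefixO_iff, prefixO_iff]
  rw [List.length_append, pref_add]
  constructor
  · intro h
    have h1 := congrArg (List.take x.length) h
    have h2 := congrArg (List.drop x.length) h
    rw [List.take_left' (by simp), List.take_left' rfl] at h1
    rw [List.drop_left' (by simp), List.drop_left' rfl] at h2
    exact ⟨h1, h2⟩
  · rintro ⟨h1, h2⟩; rw [h1, h2]

lemma prefixO_of_prefix {w z : List α} {ζ : ℕ → α} (h : w <+: z) (hz : PrefixO z ζ) :
    PrefixO w ζ := by
  obtain ⟨t, rfl⟩ := h
  exact (prefixO_append.1 hz).1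

lemma pref_prefix (ζ : ℕ → α) {n m : ℕ} (h : n ≤ m) : pref ζ n <+: pref ζ m := by
  obtain ⟨k, rfl⟩ := Nat.exists_eq_add_of_le h
  rw [pref_add]; exact List.prefix_append _ _

lemma pref_drop (ζ : ℕ → α) {n m : ℕ} (h : n ≤ m) :
    (pref ζ m).drop n = pref (shift n ζ) (m - n) := by
  obtain ⟨k, rfl⟩ := Nat.exists_eq_add_of_le h
  rw [pref_add, List.drop_left' (pref_length ζ n)]
  simp

/-- the segment `ζ[i, j)`. -/
def seg (ζ : ℕ → α) (i j : ℕ) : List α := pref (shift i ζ) (j - i)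

lemma seg_append (ζ : ℕ → α) {a b c : ℕ} (hab : a ≤ b) (hbc : b ≤ c) :
    seg ζ a b ++ seg ζ b c = seg ζ a c := by
  have hb : shift b ζ = shift (b - a) (shift a ζ) := by rw [shift_shift, Nat.add_sub_cancel' hab]
  have h2 : c - a = (b - a) + (c - b) := by omega
  unfold seg
  rw [h2, pref_add, hb]

@[simp] lemma seg_length (ζ : ℕ → α) (i j : ℕ) : (seg ζ i j).length = j - i := by simp [seg]




lemma star_nil (V : Set (List α)) : [] ∈ star V := ⟨[], by simp, by simp⟩

lemma star_append_mem {V : Set (List α)} {p v : List α} (hp : p ∈ star V) (hv : v ∈ V) :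
    p ++ v ∈ star V := by
  obtain ⟨l, hl, rfl⟩ := hp
  refine ⟨l ++ [v], ?_, by simp⟩
  intro w hw
  rcases List.mem_append.1 hw with h | h
  · exact hl w h
  · rw [List.mem_singleton.1 h]; exact hv

lemma star_snoc {V : Set (List α)} {w : List α} (hw : w ∈ star V) :
    w = [] ∨ ∃ p v, p ∈ star V ∧ v ∈ V ∧ v ≠ [] ∧ w = p ++ v := by
  obtain ⟨l, hl, rfl⟩ := hw
  induction l using List.reverseRecOn with
  | nil => simp
  | append_singleton l v ih =>
    by_cases hv : v = []
    · subst hv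
      simpa using ih (fun w hw => hl w (by simp [hw]))
    · right
      exact ⟨l.flatten, v, ⟨l, fun w hw => hl w (by simp [hw]), rfl⟩,
        hl v (by simp), hv, by simp⟩

open Classical in
/-- subset-with-restart DFA recognizing `star` of the language of `M`. -/
noncomputable def starDFA {σ : Type} [Fintype σ] (M : DFA α σ) :
    DFA α (Finset σ × Bool) where
  step := fun p a =>
    letI := Classical.decEq σ
    if _ : ∃ q ∈ p.1.image (fun q => M.step q a), q ∈ M.accept
      then (insert M.start (p.1.image (fun q => M.step q a)), true)
      else (p.1.image (fun q => M.step q a), false)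
  start := ({M.start}, true)
  accept := {p | p.2 = true}

section starDFA
variable {σ : Type} [Fintype σ] (M : DFA α σ)

/-- characterization of the run of `starDFA`. -/
lemma starDFA_eval (w : List α) :
    (((starDFA M).eval w).2 = true ↔ w ∈ star M.accepts) ∧
    (∀ q : σ, q ∈ ((starDFA M).eval w).1 ↔
      ∃ p s, w = p ++ s ∧ p ∈ star M.accepts ∧ M.eval s = q) := by
  letI := Classical.decEq σ
  letI := fun (p : Prop) => Classical.propDecidable p
  induction w using List.reverseRecOn with
  | nil =>
    constructor
    · simp [DFA.eval, DFA.evalFrom, starDFA, star_nil]; exact star_nil _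
    · intro q
      simp only [DFA.eval, DFA.evalFrom, starDFA, List.foldl_nil, Finset.mem_singleton]
      constructor
      · rintro rfl; exact ⟨[], [], by simp, star_nil _, rfl⟩
      · rintro ⟨p, s, h, hp, rfl⟩
        obtain ⟨rfl, rfl⟩ := List.append_eq_nil_iff.1 h.symm
        rfl
  | append_singleton w a ih =>
    obtain ⟨ih2, ih1⟩ := ih
    have heval : (starDFA M).eval (w ++ [a]) = (starDFA M).step ((starDFA M).eval w) a :=
      DFA.evalFrom_append_singleton _ _ _ _
    have hstep : ∀ (P : Finset σ × Bool) (b : α), (starDFA M).step P b =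
        if _ : ∃ q ∈ P.1.image (fun q => M.step q b), q ∈ M.accept
          then (insert M.start (P.1.image (fun q => M.step q b)), true)
          else (P.1.image (fun q => M.step q b), false) := by
      intro P b
      simp only [starDFA]
      congr
    -- membership in the image
    have himg : ∀ q : σ, (q ∈ ((starDFA M).eval w).1.image (fun q => M.step q a)) ↔
        ∃ p s, w ++ [a] = p ++ (s ++ [a]) ∧ p ∈ star M.accepts ∧ M.eval (s ++ [a]) = q := by
      intro q
      simp only [Finset.mem_image]
      constructor
      · rintro ⟨q', hq', rfl⟩
        obtain ⟨p, s, rfl, hp, rfl⟩ := (ih1 q').1 hq'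
        exact ⟨p, s, by simp, hp, by rw [DFA.eval_append_singleton]⟩
      · rintro ⟨p, s, hw, hp, rfl⟩
        have hw' : w = p ++ s := by
          rw [← List.append_assoc] at hw
          exact List.append_cancel_right hw
        refine ⟨M.eval s, (ih1 _).2 ⟨p, s, hw', hp, rfl⟩, ?_⟩
        rw [DFA.eval_append_singleton]
    -- the "hit" condition is equivalent to membership of w ++ [a] in star
    have hhit : (∃ q ∈ ((starDFA M).eval w).1.image (fun q => M.step q a), q ∈ M.accept) ↔
        w ++ [a] ∈ star M.accepts := by
      constructor
      · rintro ⟨q, hq, hacc⟩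
        obtain ⟨p, s, hw, hp, hev⟩ := (himg q).1 hq
        rw [hw]
        exact star_append_mem hp (by show M.eval (s ++ [a]) ∈ M.accept; rw [hev]; exact hacc)
      · intro hst
        rcases star_snoc hst with h | ⟨p, v, hp, hv, hvne, hw⟩
        · simp at h
        · obtain ⟨s, rfl⟩ : ∃ s, v = s ++ [a] := by
            rcases List.eq_nil_or_concat v with rfl | ⟨s', b, rfl⟩
            · exact absurd rfl hvne
            · rw [List.concat_eq_append] at hw ⊢
              have : a = b := by
                have := congrArg (fun l => l.getLast?) hw
                simp [List.getLast?_append] at this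
                exact this
              exact ⟨s', by rw [this]⟩
          refine ⟨M.eval (s ++ [a]), (himg _).2 ⟨p, s, hw, hp, rfl⟩, ?_⟩
          rw [← DFA.mem_accepts]; exact hv
    by_cases hcond : ∃ q ∈ ((starDFA M).eval w).1.image (fun q => M.step q a), q ∈ M.accept
    · have he : (starDFA M).eval (w ++ [a]) =
          (insert M.start (((starDFA M).eval w).1.image (fun q => M.step q a)), true) := by
        rw [heval, hstep, dif_pos hcond]
      constructor
      · rw [he]; simpa using hhit.1 hcond
      · intro q
        rw [he]
        simp only [Finset.mem_insert]
        constructor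
        · rintro (rfl | hq)
          · exact ⟨w ++ [a], [], by simp, hhit.1 hcond, rfl⟩
          · obtain ⟨p, s, hw, hp, hev⟩ := (himg q).1 hq
            exact ⟨p, s ++ [a], hw, hp, hev⟩
        · rintro ⟨p, s, hw, hp, rfl⟩
          rcases List.eq_nil_or_concat s with rfl | ⟨s', b, rfl⟩
          · left; rfl
          · right
            rw [List.concat_eq_append] at hw ⊢
            have hb : a = b := by
              have := congrArg (fun l => l.getLast?) hw
              simp [List.getLast?_append] at this
              exact this
            subst hb
            exact (himg _).2 ⟨p, s', hw, hp, rfl⟩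
    · have he : (starDFA M).eval (w ++ [a]) =
          ((((starDFA M).eval w).1.image (fun q => M.step q a)), false) := by
        rw [heval, hstep, dif_neg hcond]
      constructor
      · rw [he]
        simp only [Bool.false_eq_true, false_iff]
        intro hst; exact hcond (hhit.2 hst)
      · intro q
        rw [he]
        constructor
        · intro hq
          obtain ⟨p, s, hw, hp, hev⟩ := (himg q).1 hq
          exact ⟨p, s ++ [a], hw, hp, hev⟩
        · rintro ⟨p, s, hw, hp, rfl⟩
          rcases List.eq_nil_or_concat s with rfl | ⟨s', b, rfl⟩
          · exfalso
            simp at hw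
            exact hcond (hhit.2 (by rw [← hw] at hp; exact hp))
          · rw [List.concat_eq_append] at hw ⊢
            have hb : a = b := by
              have := congrArg (fun l => l.getLast?) hw
              simp [List.getLast?_append] at this
              exact this
            subst hb
            exact (himg _).2 ⟨p, s', hw, hp, rfl⟩

lemma starDFA_accepts : (starDFA M).accepts = star M.accepts := by
  ext w
  rw [DFA.mem_accepts]
  exact (starDFA_eval M w).1

end starDFA



section safe
variable {Q : Type*} [Fintype Q] (A : DFA α Q)

/-- a state from which no accepting state is reachable. -/
def DeadState (q : Q) : Prop := ∀ y : List α, A.evalFrom q y ∉ A.accept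

lemma deadState_evalFrom {A : DFA α Q} {q : Q} (h : DeadState A q) (s : List α) :
    DeadState A (A.evalFrom q s) := by
  intro y
  rw [← DFA.evalFrom_of_append]
  exact h _

lemma exists_safe_state (h : InfixComplete (A.accepts : Set (List α))) :
    ∃ x0 : List α, ∀ s : List α, ¬ DeadState A (A.eval (x0 ++ s)) := by
  by_contra hc
  push_neg at hc
  -- from every reachable state, a dead state is reachable
  have hkill : ∀ l : List Q, ∃ w : List α,
      ∀ q ∈ l, (∃ x, A.eval x = q) → DeadState A (A.evalFrom q w) := by
    intro l
    induction l with
    | nil => exact ⟨[], by simp⟩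
    | cons q l ih =>
      obtain ⟨w, hw⟩ := ih
      by_cases hreach : ∃ x, A.eval x = q
      · obtain ⟨x, hx⟩ := hreach
        by_cases hdead : DeadState A (A.evalFrom q w)
        · refine ⟨w, ?_⟩
          intro q' hq' hr
          rcases List.mem_cons.1 hq' with rfl | hq'
          · exact hdead
          · exact hw q' hq' hr
        · obtain ⟨s, hs⟩ := hc (x ++ w)
          refine ⟨w ++ s, ?_⟩
          intro q' hq' hr
          rcases List.mem_cons.1 hq' with rfl | hq'
          · rw [DFA.evalFrom_of_append]
            have : A.eval (x ++ w ++ s) = A.evalFrom (A.evalFrom q' w) s := by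
              rw [DFA.eval, DFA.evalFrom_of_append, DFA.evalFrom_of_append]
              rw [show A.evalFrom A.start x = q' from hx]
            rw [← this]
            exact hs
          · rw [DFA.evalFrom_of_append]
            exact deadState_evalFrom (hw q' hq' hr) s
      · refine ⟨w, ?_⟩
        intro q' hq' hr
        rcases List.mem_cons.1 hq' with rfl | hq'
        · exact absurd hr hreach
        · exact hw q' hq' hr
  obtain ⟨w, hw⟩ := hkill (Finset.univ : Finset Q).toList
  obtain ⟨x, y, hxy⟩ := h w
  have hdead : DeadState A (A.eval (x ++ w)) := by
    have := hw (A.eval x) (by simp [Finset.mem_toList]) ⟨x, rfl⟩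
    rwa [DFA.eval, DFA.evalFrom_of_append] at *
  have : A.eval (x ++ w ++ y) ∈ A.accept := (DFA.mem_accepts _).1 hxy
  rw [DFA.eval, DFA.evalFrom_of_append] at this
  exact hdead y this

end safe

open Filter Topology MeasureTheory

section meas
variable {α : Type*} [Fintype α] [Nonempty α]

open Classical in
noncomputable def wordsLen (α : Type*) [Fintype α] (n : ℕ) : Finset (List α) :=
  (Finset.univ : Finset (Fin n → α)).image List.ofFn

lemma mem_wordsLen {n : ℕ} {l : List α} (h : l.length = n) : l ∈ wordsLen α n := by
  classical
  subst h
  exact Finset.mem_image.2 ⟨l.get, Finset.mem_univ _, List.ofFn_get l⟩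

lemma card_wordsLen_le (n : ℕ) : (wordsLen α n).card ≤ Fintype.card α ^ n := by
  classical
  refine le_trans (Finset.card_image_le) ?_
  simp [Fintype.card_fun]

variable [MeasurableSpace α] [DiscreteMeasurableSpace α]

lemma bad_null (μ : Measure (ℕ → α))
    (hμ : ∀ w : List α, μ {ζ | PrefixO w ζ} = ((Fintype.card α : ENNReal))⁻¹ ^ w.length)
    (T : ℕ) (hT : 1 ≤ T) (g : List α → List α) (hg : ∀ z, (g z).length ≤ T) (b : List α) :
    μ {ζ | PrefixO b ζ ∧ ∀ j : ℕ,
        ¬ PrefixO (g (pref ζ (b.length + (j+1)*T))) (shift (b.length + (j+1)*T) ζ)} = 0 := by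
  classical
  set c := Fintype.card α with hc
  have hc0 : 0 < c := Fintype.card_pos
  set κ : ENNReal := ((c : ENNReal))⁻¹ with hκ
  set Bad : Set (ℕ → α) := {ζ | PrefixO b ζ ∧ ∀ j : ℕ,
        ¬ PrefixO (g (pref ζ (b.length + (j+1)*T))) (shift (b.length + (j+1)*T) ζ)} with hBad
  set n : ℕ → ℕ := fun j => b.length + (j+1)*T with hn
  have hcE0 : (c : ENNReal) ≠ 0 := by
    exact_mod_cast Nat.pos_iff_ne_zero.1 hc0
  have hcEtop : (c : ENNReal) ≠ ⊤ := by simp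
  have hκtop : κ ≠ ⊤ := by
    rw [hκ]
    simp [ENNReal.inv_ne_top, hcE0]
  -- the recursive finite covers
  have key : ∀ j : ℕ, ∃ Z : Finset (List α),
      (∀ z ∈ Z, z.length = n j) ∧ (∀ ζ ∈ Bad, pref ζ (n j) ∈ Z) ∧
      Z.card ≤ c ^ T * (c ^ T - 1) ^ j := by
    intro j
    induction j with
    | zero =>
      refine ⟨(wordsLen α T).image (fun w => b ++ w), ?_, ?_, ?_⟩
      · intro z hz
        obtain ⟨w, hw, rfl⟩ := Finset.mem_image.1 hz
        have hwlen : w.length = T := by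
          classical
          obtain ⟨f, _, rfl⟩ := Finset.mem_image.1 hw
          simp
        simp only [hn, List.length_append, hwlen]
        omega
      · intro ζ hζ
        have hb : pref ζ b.length = b := pref_eq_of_prefixO hζ.1
        have : pref ζ (n 0) = b ++ pref (shift b.length ζ) T := by
          rw [hn]
          simp only [zero_add, one_mul]
          rw [pref_add, hb]
        rw [this]
        exact Finset.mem_image.2 ⟨_, mem_wordsLen (by simp), rfl⟩
      · simpa using le_trans Finset.card_image_le (card_wordsLen_le T)
    | succ j ih =>
      obtain ⟨Z, hlen, hmem, hcard⟩ := ih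
      refine ⟨Z.biUnion (fun z =>
        ((wordsLen α T).filter (fun w => ¬ (g z <+: w))).image (fun w => z ++ w)), ?_, ?_, ?_⟩
      · intro z' hz'
        obtain ⟨z, hz, hz'2⟩ := Finset.mem_biUnion.1 hz'
        obtain ⟨w, hw, rfl⟩ := Finset.mem_image.1 hz'2
        have hwlen : w.length = T := by
          obtain ⟨f, _, rfl⟩ := Finset.mem_image.1 (Finset.mem_filter.1 hw).1
          simp
        simp only [hn, List.length_append, hwlen, hlen z hz]
        ring
      · intro ζ hζ
        have hz : pref ζ (n j) ∈ Z := hmem ζ hζ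
        have hsplit : pref ζ (n (j+1)) = pref ζ (n j) ++ pref (shift (n j) ζ) T := by
          have : n (j+1) = n j + T := by simp [hn]; ring
          rw [this, pref_add]
        rw [hsplit]
        refine Finset.mem_biUnion.2 ⟨_, hz, Finset.mem_image.2 ⟨_, ?_, rfl⟩⟩
        refine Finset.mem_filter.2 ⟨mem_wordsLen (by simp), ?_⟩
        intro hpre
        exact hζ.2 j (prefixO_of_prefix hpre (prefixO_pref (shift (n j) ζ) T))
      · refine le_trans (Finset.card_biUnion_le) ?_
        have hone : ∀ z ∈ Z,
            (((wordsLen α T).filter (fun w => ¬ (g z <+: w))).image (fun w => z ++ w)).card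
            ≤ c ^ T - 1 := by
          intro z _
          refine le_trans Finset.card_image_le ?_
          have hpad : (g z ++ List.replicate (T - (g z).length) (Classical.arbitrary α))
              ∈ wordsLen α T := mem_wordsLen (by have := hg z; simp; omega)
          have hsub : (wordsLen α T).filter (fun w => ¬ (g z <+: w)) ⊆
              (wordsLen α T).erase (g z ++ List.replicate (T - (g z).length)
                (Classical.arbitrary α)) := by
            intro w hw
            obtain ⟨hw1, hw2⟩ := Finset.mem_filter.1 hw
            refine Finset.mem_erase.2 ⟨?_, hw1⟩
            intro hEq
            exact hw2 (hEq ▸ List.prefix_append _ _)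
          refine le_trans (Finset.card_le_card hsub) ?_
          rw [Finset.card_erase_of_mem hpad]
          exact Nat.sub_le_sub_right (card_wordsLen_le T) 1
        calc ∑ z ∈ Z, _ ≤ ∑ _z ∈ Z, (c ^ T - 1) := Finset.sum_le_sum hone
          _ = Z.card * (c ^ T - 1) := by simp [Finset.sum_const, Nat.smul_one_eq_cast]
          _ ≤ (c ^ T * (c ^ T - 1) ^ j) * (c ^ T - 1) := by
              exact Nat.mul_le_mul_right _ hcard
          _ = c ^ T * (c ^ T - 1) ^ (j+1) := by ring
  -- measure bound
  set r : ENNReal := ((c ^ T - 1 : ℕ) : ENNReal) * κ ^ T with hr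
  have hbound : ∀ j : ℕ, μ Bad ≤ (κ ^ b.length * (κ ^ T * (c ^ T : ℕ))) * r ^ j := by
    intro j
    obtain ⟨Z, hlen, hmem, hcard⟩ := key j
    have hsub : Bad ⊆ ⋃ z ∈ Z, {ζ | PrefixO z ζ} := by
      intro ζ hζ
      exact Set.mem_biUnion (hmem ζ hζ) (prefixO_pref ζ (n j))
    calc μ Bad ≤ μ (⋃ z ∈ Z, {ζ | PrefixO z ζ}) := measure_mono hsub
      _ ≤ ∑ z ∈ Z, μ {ζ | PrefixO z ζ} := measure_biUnion_finset_le Z _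
      _ ≤ ∑ _z ∈ Z, κ ^ (n j) := by
          refine Finset.sum_le_sum ?_
          intro z hz
          rw [hμ z, hlen z hz]
      _ = Z.card • κ ^ (n j) := by rw [Finset.sum_const]
      _ ≤ (c ^ T * (c ^ T - 1) ^ j) • κ ^ (n j) := by
          exact nsmul_le_nsmul_left zero_le hcard
      _ = ((c ^ T * (c ^ T - 1) ^ j : ℕ) : ENNReal) * κ ^ (n j) := by
          rw [nsmul_eq_mul]
      _ = (κ ^ b.length * (κ ^ T * (c ^ T : ℕ))) * r ^ j := by
          rw [hn]
          push_cast
          rw [hr]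
          rw [show b.length + (j+1)*T = b.length + T + j*T by ring]
          rw [pow_add, pow_add, pow_mul]
          push_cast
          ring
  have hone : κ ^ T * ((c ^ T : ℕ) : ENNReal) = 1 := by
    rw [hκ]
    push_cast
    rw [← ENNReal.inv_pow]
    exact ENNReal.inv_mul_cancel (pow_ne_zero _ hcE0) (ENNReal.pow_ne_top hcEtop)
  have hbound' : ∀ j : ℕ, μ Bad ≤ κ ^ b.length * r ^ j := by
    intro j
    have := hbound j
    rwa [hone, mul_one] at this
  have hltnat : ((c ^ T - 1 : ℕ) : ENNReal) < ((c : ENNReal)) ^ T := by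
    rw [show ((c : ENNReal)) ^ T = ((c ^ T : ℕ) : ENNReal) by push_cast; ring]
    exact_mod_cast Nat.sub_lt (pow_pos hc0 T) one_pos
  have hrlt : r < 1 := by
    have h1 : r = ((c ^ T - 1 : ℕ) : ENNReal) * (((c : ENNReal)) ^ T)⁻¹ := by
      rw [hr, hκ, ← ENNReal.inv_pow]
    rw [h1]
    have h2 : (1 : ENNReal) = ((c : ENNReal)) ^ T * (((c : ENNReal)) ^ T)⁻¹ := by
      rw [ENNReal.mul_inv_cancel (pow_ne_zero _ hcE0) (ENNReal.pow_ne_top hcEtop)]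
    rw [h2]
    exact ENNReal.mul_lt_mul_left (by simpa using pow_ne_zero _ hcE0)
      (by simpa using ENNReal.pow_ne_top (ENNReal.inv_ne_top.2 hcE0)) hltnat
  have htend : Tendsto (fun j : ℕ => κ ^ b.length * r ^ j) atTop (𝓝 0) := by
    have h1 := ENNReal.tendsto_pow_atTop_nhds_zero_of_lt_one hrlt
    have h2 := ENNReal.Tendsto.const_mul (a := κ ^ b.length) h1
      (Or.inr (ENNReal.pow_ne_top hκtop))
    simpa using h2
  have : μ Bad ≤ 0 := ge_of_tendsto' htend hbound'
  exact le_antisymm this zero_le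
end meas

open Filter Topology MeasureTheory



lemma joinUpTo_add (v : ℕ → List α) (k m : ℕ) :
    joinUpTo v (k + m) = joinUpTo v k ++ (List.ofFn fun i : Fin m => v (k + i)).flatten := by
  unfold joinUpTo
  rw [List.ofFn_add, List.flatten_append]
  congr 2

lemma joinUpTo_prefix (v : ℕ → List α) {k k' : ℕ} (h : k ≤ k') :
    joinUpTo v k <+: joinUpTo v k' := by
  obtain ⟨m, rfl⟩ := Nat.exists_eq_add_of_le h
  rw [joinUpTo_add]
  exact List.prefix_append _ _

lemma mem_omegaPow_of_cuts {V : Set (List α)} {ξ : ℕ → α} (k : ℕ → ℕ)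
    (hk0 : k 0 = 0) (hmono : ∀ i, k i < k (i + 1))
    (hseg : ∀ i, seg ξ (k i) (k (i + 1)) ∈ star V) : ξ ∈ omegaPow V := by
  classical
  have hkmono : ∀ {i j : ℕ}, i ≤ j → k i ≤ k j :=
    fun h => (strictMono_nat_of_lt_succ hmono).monotone h
  have hki : ∀ i, i ≤ k i := by
    intro i
    induction i with
    | zero => simp [hk0]
    | succ i ih => exact Nat.lt_of_le_of_lt ih (hmono i)
  -- choose decompositions
  have hdec : ∀ i, ∃ l : List (List α), (∀ w ∈ l, w ∈ V) ∧ seg ξ (k i) (k (i+1)) = l.flatten :=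
    fun i => hseg i
  choose l hl1 hl2 using hdec
  have hlne : ∀ i, l i ≠ [] := by
    intro i h
    have := hl2 i
    rw [h] at this
    have hlen := congrArg List.length this
    simp at hlen
    have := hmono i
    omega
  set LL : ℕ → List (List α) := fun i => (List.ofFn (fun t : Fin i => l t)).flatten with hLL
  have hLLsucc : ∀ i, LL (i+1) = LL i ++ l i := by
    intro i
    rw [hLL]
    simp only
    rw [List.ofFn_succ', List.concat_eq_append, List.flatten_append]
    simp
  have hLLlen : ∀ i, i ≤ (LL i).length := by
    intro i
    induction i with
    | zero => simp
    | succ i ih =>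
      rw [hLLsucc i, List.length_append]
      have : 1 ≤ (l i).length := List.length_pos_iff.2 (hlne i)
      omega
  have hLLpre : ∀ {i j : ℕ}, i ≤ j → LL i <+: LL j := by
    intro i j h
    induction j with
    | zero => simp_all
    | succ j ih =>
      by_cases hij : i ≤ j
      · refine (ih hij).trans ?_
        rw [hLLsucc j]
        exact List.prefix_append _ _
      · have : i = j + 1 := by omega
        subst this; rfl
  have hLLflat : ∀ i, (LL i).flatten = seg ξ 0 (k i) := by
    intro i
    induction i with
    | zero => simp [hLL, seg, hk0, pref]
    | succ i ih =>
      rw [hLLsucc i, List.flatten_append, ih, ← hl2 i]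
      have h0 : (0:ℕ) ≤ k i := Nat.zero_le _
      exact seg_append ξ h0 (le_of_lt (hmono i))
  have hLLmem : ∀ i (w : List α), w ∈ LL i → w ∈ V := by
    intro i w hw
    rw [hLL] at hw
    obtain ⟨lt, hlt, hwlt⟩ := List.mem_flatten.1 hw
    obtain ⟨t, rfl⟩ := List.mem_ofFn.1 hlt
    exact hl1 _ _ hwlt
  set v : ℕ → List α := fun n => (LL (n+1)).getD n [] with hv
  have hvget : ∀ {n i : ℕ} (h : n < (LL i).length), v n = (LL i)[n] := by
    intro n i h
    have hn1 : n < (LL (n+1)).length := Nat.lt_of_lt_of_le (Nat.lt_succ_self n) (hLLlen (n+1))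
    rw [hv]
    simp only
    rw [List.getD_eq_getElem _ _ hn1]
    rcases le_total (n+1) i with hc | hc
    · exact (hLLpre hc).getElem hn1
    · exact ((hLLpre hc).getElem h).symm
  have hveq : ∀ i, joinUpTo v (LL i).length = (LL i).flatten := by
    intro i
    unfold joinUpTo
    congr 1
    apply List.ext_getElem (by simp)
    intro n h1 h2
    simp only [List.getElem_ofFn]
    exact hvget h2
  refine ⟨v, ?_, ?_, ?_⟩
  · intro n
    have hn1 : n < (LL (n+1)).length := Nat.lt_of_lt_of_le (Nat.lt_succ_self n) (hLLlen (n+1))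
    have := hvget hn1
    rw [this]
    exact hLLmem _ _ (List.getElem_mem hn1)
  · rw [Filter.tendsto_atTop_atTop]
    intro B
    refine ⟨(LL B).length, ?_⟩
    intro m hm
    have h1 : B ≤ (joinUpTo v (LL B).length).length := by
      rw [hveq B, hLLflat B]
      simp only [seg_length]
      have := hki B
      omega
    exact le_trans h1 (List.IsPrefix.length_le (joinUpTo_prefix v hm))
  · intro m
    have hpre : joinUpTo v m <+: joinUpTo v (LL m).length :=
      joinUpTo_prefix v (hLLlen m)
    rw [hveq m, hLLflat m] at hpre
    refine prefixO_of_prefix hpre ?_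
    have : seg ξ 0 (k m) = pref ξ (k m) := by
      unfold seg
      rw [Nat.sub_zero]
      congr 1
      funext n; simp [shift]
    rw [this]
    exact prefixO_pref ξ (k m)


end AuxiliaryLemmas

/-- If `U, V` are regular, `U ≠ ∅` and `V*` is infix complete, then there is a
finite word `x` such that almost every ω-word with prefix `x` lies in `U·V^ω`. -/
theorem almost_sure_of_star_infixComplete {α : Type*} [Fintype α] [Nonempty α]
    [MeasurableSpace α] [DiscreteMeasurableSpace α]
    (μ : Measure (ℕ → α))
    (hμ : ∀ w : List α, μ {ζ | PrefixO w ζ} = ((Fintype.card α : ENNReal))⁻¹ ^ w.length)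
    (U V : Set (List α)) (hUreg : RegularLang U) (hUne : U.Nonempty)
    (hVreg : RegularLang V) (hVstar : InfixComplete (star V)) :
    ∃ x : List α, μ ({ζ : ℕ → α | PrefixO x ζ} \ catOmega U V) = 0 := by
  classical
  obtain ⟨u, hu⟩ := hUne
  obtain ⟨σ, hσ, M, hM⟩ := hVreg
  letI := hσ
  set A := starDFA M with hAdef
  have hA : (A.accepts : Set (List α)) = star V := by rw [starDFA_accepts, hM]
  have hVstar' : InfixComplete (A.accepts : Set (List α)) := by rw [hA]; exact hVstar
  obtain ⟨x0, hx0⟩ := exists_safe_state A hVstar'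
  -- accepting continuations
  have hycEx : ∃ yc : (Finset σ × Bool) → List α,
      ∀ q, ¬ DeadState A q → A.evalFrom q (yc q) ∈ A.accept := by
    refine ⟨fun q => if h : ∃ y, A.evalFrom q y ∈ A.accept then h.choose else [], ?_⟩
    intro q hq
    have h : ∃ y, A.evalFrom q y ∈ A.accept := by
      unfold DeadState at hq
      push_neg at hq
      exact hq
    simp only [dif_pos h]
    exact h.choose_spec
  obtain ⟨yc, hyc⟩ := hycEx
  set L : ℕ := Finset.univ.sup (fun q : Finset σ × Bool => (yc q).length) with hLdef
  have hL : ∀ q, (yc q).length ≤ L := by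
    intro q
    rw [hLdef]
    exact Finset.le_sup (f := fun q : Finset σ × Bool => (yc q).length) (Finset.mem_univ q)
  set T : ℕ := L + x0.length + 1 with hTdef
  set qsafe := A.eval x0 with hqsafe
  set G : List α → List α → List α :=
    fun b z => yc (A.evalFrom qsafe (z.drop b.length)) ++ x0 with hGdef
  have hG : ∀ b z, (G b z).length ≤ T := by
    intro b z
    rw [hGdef]
    simp only [List.length_append]
    have := hL (A.evalFrom qsafe (z.drop b.length))
    omega
  -- the global null set
  set Bad : List α → Set (ℕ → α) := fun b => {ζ | PrefixO b ζ ∧ ∀ j : ℕ,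
      ¬ PrefixO (G b (pref ζ (b.length + (j+1)*T))) (shift (b.length + (j+1)*T) ζ)} with hBaddef
  have hN : μ (⋃ b : List α, Bad b) = 0 :=
    measure_iUnion_null (fun b => bad_null μ hμ T (by omega) (G b) (hG b) b)
  refine ⟨u ++ x0, ?_⟩
  refine le_antisymm ?_ zero_le
  rw [← hN]
  refine measure_mono ?_
  rintro ζ ⟨hζpre, hζnot⟩
  by_contra hζN
  apply hζnot
  -- core argument: ζ is in catOmega U V
  have hnotbad : ∀ b : List α, ζ ∉ Bad b := by
    intro b hb
    exact hζN (Set.mem_iUnion.2 ⟨b, hb⟩)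
  -- the step lemma
  have hstep : ∀ K : ℕ, PrefixO x0 (shift K ζ) →
      ∃ K', K < K' ∧ PrefixO x0 (shift K' ζ) ∧ seg ζ K K' ∈ star V := by
    intro K hK
    set b := pref ζ (K + x0.length) with hbdef
    have hblen : b.length = K + x0.length := by rw [hbdef]; simp
    have hbpre : PrefixO b ζ := prefixO_pref ζ _
    have := hnotbad b
    rw [hBaddef] at this
    simp only [Set.mem_setOf_eq, not_and, not_forall, not_not] at this
    obtain ⟨j, hj⟩ := this hbpre
    set m := b.length + (j+1)*T with hmdef
    set z := pref ζ m with hzdef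
    set y := yc (A.evalFrom qsafe (z.drop b.length)) with hydef
    have hmatch : PrefixO (y ++ x0) (shift m ζ) := hj
    set mid := pref (shift (K + x0.length) ζ) ((j+1)*T) with hmiddef
    have hdropz : z.drop b.length = mid := by
      rw [hzdef, hmiddef, pref_drop ζ (by omega), hblen]
      congr 1
      omega
    set r := A.evalFrom qsafe mid with hrdef
    have hry : A.evalFrom r (yc r) ∈ A.accept := by
      refine hyc r ?_
      have : r = A.eval (x0 ++ mid) := by
        rw [hrdef, DFA.eval, DFA.evalFrom_of_append, hqsafe, DFA.eval]
      rw [this]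
      exact hx0 mid
    have hyr : y = yc r := by rw [hydef, hdropz, hrdef]
    set K' := m + y.length with hK'def
    have hmK : m = K + x0.length + (j+1)*T := by rw [hmdef, hblen]
    have hKK' : K < K' := by
      have h1 : T ≤ (j+1) * T := Nat.le_mul_of_pos_left T (by omega)
      omega
    refine ⟨K', hKK', ?_, ?_⟩
    · have h2 := (prefixO_append.1 hmatch).2
      rw [shift_shift] at h2
      exact h2
    · -- the segment
      have hseg1 : seg ζ K (K + x0.length) = x0 := by
        unfold seg
        rw [Nat.add_sub_cancel_left]
        exact pref_eq_of_prefixO hK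
      have hseg2 : seg ζ (K + x0.length) m = mid := by
        unfold seg
        rw [hmiddef]
        congr 1
        omega
      have hseg3 : seg ζ m K' = y := by
        unfold seg
        rw [hK'def, Nat.add_sub_cancel_left]
        exact pref_eq_of_prefixO (prefixO_append.1 hmatch).1
      have hsplit : seg ζ K K' = x0 ++ (mid ++ y) := by
        rw [← hseg1, ← hseg2, ← hseg3]
        rw [seg_append ζ (by omega) (by omega), seg_append ζ (by omega) (by omega)]
      rw [hsplit, ← hA]
      show A.eval (x0 ++ (mid ++ y)) ∈ A.accept
      rw [DFA.eval, DFA.evalFrom_of_append, DFA.evalFrom_of_append]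
      have hqr : A.evalFrom (A.evalFrom A.start x0) mid = r := by
        rw [hrdef, hqsafe, DFA.eval]
      rw [hqr, hyr]
      exact hry
  -- build the cut sequence
  have hstart : PrefixO x0 (shift u.length ζ) := (prefixO_append.1 hζpre).2
  choose f hf1 hf2 hf3 using hstep
  let kk : ℕ → {K : ℕ // PrefixO x0 (shift K ζ)} := fun i =>
    Nat.rec ⟨u.length, hstart⟩ (fun _ prev => ⟨f prev.1 prev.2, hf2 prev.1 prev.2⟩) i
  have hkk0 : (kk 0).1 = u.length := rfl
  have hkksucc : ∀ i, (kk (i+1)).1 = f (kk i).1 (kk i).2 := fun i => rfl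
  have hkmono : ∀ i, (kk i).1 < (kk (i+1)).1 := by
    intro i
    rw [hkksucc i]
    exact hf1 _ _
  have hkseg : ∀ i, seg ζ (kk i).1 (kk (i+1)).1 ∈ star V := by
    intro i
    rw [hkksucc i]
    exact hf3 _ _
  have hkge : ∀ i, u.length ≤ (kk i).1 := by
    intro i
    induction i with
    | zero => rw [hkk0]
    | succ i ih => exact le_trans ih (le_of_lt (hkmono i))
  -- the tail ω-word
  set ξ : ℕ → α := shift u.length ζ with hξdef
  have hξ : ξ ∈ omegaPow V := by
    refine mem_omegaPow_of_cuts (fun i => (kk i).1 - u.length)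
      (by show (kk 0).1 - u.length = 0; rw [hkk0]; omega) ?_ ?_
    · intro i
      show (kk i).1 - u.length < (kk (i+1)).1 - u.length
      have := hkmono i
      have := hkge i
      have := hkge (i+1)
      omega
    · intro i
      show seg ξ ((kk i).1 - u.length) ((kk (i+1)).1 - u.length) ∈ star V
      have hEq : seg ξ ((kk i).1 - u.length) ((kk (i+1)).1 - u.length)
          = seg ζ (kk i).1 (kk (i+1)).1 := by
        have h1 := hkge i
        have h2 := hkge (i+1)
        unfold seg
        rw [hξdef, shift_shift,
          show u.length + ((kk i).1 - u.length) = (kk i).1 from by omega,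
          show (kk (i+1)).1 - u.length - ((kk i).1 - u.length) = (kk (i+1)).1 - (kk i).1
            from by omega]
      rw [hEq]
      exact hkseg i
  refine ⟨u, hu, ξ, hξ, ?_⟩
  funext n
  unfold appendO
  split
  · rename_i h
    have hpu : PrefixO u ζ := (prefixO_append.1 hζpre).1
    exact hpu ⟨n, h⟩
  · rename_i h
    rw [hξdef]
    unfold shift
    congr 1
    omega

end Sparse
end

section
/- Let Σ be a finite nonempty alphabet, L ⊆ ℬ^Σ and T ∈ ℬ^Σ. Then the upper asymptotic density satisfies P̄_lim(LT) = (1/(|Σ|^{|T|}·4^{|T|+1})) · P̄_lim(L). -/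
open Filter Topology

namespace Sparse

inductive BTree (α : Type*) where
  | nil : BTree α
  | node : α → BTree α → BTree α → BTree α

namespace BTree

variable {α : Type*}

/-- The number of nodes of a binary tree. -/
def size : BTree α → ℕ
  | nil => 0
  | node _ l r => size l + size r + 1

/-- `Subtree S T` means `S = T`, or `T` is nonempty and `S` is a subtree of the left or
right subtree of the root of `T`. -/
inductive Subtree : BTree α → BTree α → Prop where
  | refl (T : BTree α) : Subtree T T
  | left {S l r : BTree α} {a : α} : Subtree S l → Subtree S (node a l r)
  | right {S l r : BTree α} {a : α} : Subtree S r → Subtree S (node a l r)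

end BTree

variable {α : Type*}

/-- A run of a tree automaton with transition relation `Δ` on a binary tree: the empty tree is
assigned `none` (i.e. `⊥`), and a nonempty tree with root label `a` and run values `ql`, `qr` on
the two subtrees is assigned a state `q` with `(ql, qr, a, q) ∈ Δ`. -/
inductive Run {Q : Type*} (Δ : Option Q → Option Q → α → Q → Prop) :
    BTree α → Option Q → Prop where
  | nil : Run Δ BTree.nil none
  | node {a : α} {l r : BTree α} {ql qr : Option Q} {q : Q} :
      Run Δ l ql → Run Δ r qr → Δ ql qr a q → Run Δ (BTree.node a l r) (some q)

/-- A tree automaton with transitions `Δ` and accepting states `F` accepts `T` if some run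
assigns `T` a state in `F`. -/
def TAccepts {Q : Type*} (Δ : Option Q → Option Q → α → Q → Prop) (F : Set Q)
    (T : BTree α) : Prop :=
  ∃ q ∈ F, Run Δ T (some q)

/-- A tree language is regular iff it is the set of trees accepted by some tree automaton
with finitely many states. -/
def RegularTreeLang (L : Set (BTree α)) : Prop :=
  ∃ (Q : Type) (_ : Fintype Q) (Δ : Option Q → Option Q → α → Q → Prop) (F : Set Q),
    L = {T | TAccepts Δ F T}

/-- The relative number of `n`-node trees in `L`:
`|L ∩ ℬ^Σ_n| / (C_n ⬝ |Σ|^n)`, where `C_n` is the `n`-th Catalan number. -/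
noncomputable def density [Fintype α] (L : Set (BTree α)) (n : ℕ) : ℝ :=
  (Nat.card {T : BTree α // T ∈ L ∧ T.size = n} : ℝ) /
    ((catalan n : ℝ) * (Fintype.card α : ℝ) ^ n)

/-- `L` has asymptotic density `c` if `density L n` tends to `c` as `n → ∞`. -/
def HasDensity [Fintype α] (L : Set (BTree α)) (c : ℝ) : Prop :=
  Tendsto (density L) atTop (𝓝 c)

/-- The upper asymptotic density `P̄_lim(L) = limsup_n density L n`. -/
noncomputable def upperDensity [Fintype α] (L : Set (BTree α)) : ℝ :=
  limsup (density L) atTop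

/-- `LT = {conc_a(S, T) : a ∈ Σ, S ∈ L}`. -/
def concL (L : Set (BTree α)) (T : BTree α) : Set (BTree α) :=
  {X | ∃ (a : α) (S : BTree α), S ∈ L ∧ X = BTree.node a S T}

/-- `LT⁻¹ = {S : ∃ a, conc_a(S, T) ∈ L}`. -/
def quotR (L : Set (BTree α)) (T : BTree α) : Set (BTree α) :=
  {S | ∃ a : α, BTree.node a S T ∈ L}

/-- `T⁻¹L = {S : ∃ a, conc_a(T, S) ∈ L}`. -/
def quotL (T : BTree α) (L : Set (BTree α)) : Set (BTree α) :=
  {S | ∃ a : α, BTree.node a T S ∈ L}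

/-- `L[T_k, …, T_1]⁻¹`, where the list is `[T_k, …, T_1]` (so the head is `T_k`):
`L[]⁻¹ = L` and `L[T_k,…,T_1]⁻¹ = (L[T_{k-1},…,T_1]⁻¹)T_k⁻¹ ∪ T_k⁻¹(L[T_{k-1},…,T_1]⁻¹)`. -/
def quotIter (L : Set (BTree α)) : List (BTree α) → Set (BTree α)
  | [] => L
  | T :: Ts => quotR (quotIter L Ts) T ∪ quotL T (quotIter L Ts)

/-- A state `q` is reachable if some run of the automaton on some tree assigns `q` to the tree. -/
def TReachable {Q : Type*} (Δ : Option Q → Option Q → α → Q → Prop) (q : Q) : Prop :=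
  ∃ T : BTree α, Run Δ T (some q)

/-- A set of states `V` is a sink if every transition involving a state of `V` as one of the
two child values leads into `V`. -/
def Sink {Q : Type*} (Δ : Option Q → Option Q → α → Q → Prop) (V : Set Q) : Prop :=
  ∀ q ∈ V, ∀ (q' : Option Q) (a : α) (q'' : Q),
    (Δ (some q) q' a q'' ∨ Δ q' (some q) a q'') → q'' ∈ V

section UpperDensityConcL

open BTree Tree

variable {α : Type*}

/-- The shape of a labelled binary tree, as an unlabelled `Tree Unit`. -/
private def bshape : BTree α → Tree Unit
  | .nil => .nil
  | .node _ l r => .node () (bshape l) (bshape r)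

/-- The preorder list of labels of a binary tree. -/
private def blabels : BTree α → List α
  | .nil => []
  | .node a l r => a :: (blabels l ++ blabels r)

private lemma numNodes_bshape (T : BTree α) : (bshape T).numNodes = T.size := by
  induction T with
  | nil => rfl
  | node a l r ihl ihr => simp [bshape, BTree.size, Tree.numNodes, ihl, ihr]

private lemma blabels_length (T : BTree α) : (blabels T).length = T.size := by
  induction T with
  | nil => rfl
  | node a l r ihl ihr =>
    simp only [blabels, BTree.size, List.length_cons, List.length_append, ihl, ihr]
    try omega

private lemma eq_of_bshape_blabels :
    ∀ (S T : BTree α), bshape S = bshape T → blabels S = blabels T → S = T := by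
  intro S
  induction S with
  | nil =>
    intro T hs _
    cases T with
    | nil => rfl
    | node a l r => simp [bshape] at hs
  | node a l r ihl ihr =>
    intro T hs hl
    cases T with
    | nil => simp [bshape] at hs
    | node a' l' r' =>
      simp only [bshape, BinaryTree.node.injEq, true_and] at hs
      simp only [blabels, List.cons.injEq] at hl
      obtain ⟨hsl, hsr⟩ := hs
      obtain ⟨rfl, happ⟩ := hl
      have hlen : (blabels l).length = (blabels l').length := by
        rw [blabels_length, blabels_length, ← numNodes_bshape, ← numNodes_bshape, hsl]
      obtain ⟨h1, h2⟩ := List.append_inj happ hlen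
      rw [ihl _ hsl h1, ihr _ hsr h2]

private lemma catalan_pos' (n : ℕ) : 0 < catalan n := by
  rcases Nat.eq_zero_or_pos (catalan n) with h | h
  · exfalso
    have h1 := succ_mul_catalan_eq_centralBinom n
    rw [h, mul_zero] at h1
    exact (Nat.centralBinom_pos n).ne' h1.symm
  · exact h

private lemma nat_card_le [Fintype α] (L : Set (BTree α)) (n : ℕ) :
    Nat.card {T : BTree α // T ∈ L ∧ T.size = n} ≤ catalan n * Fintype.card α ^ n := by
  classical
  set f : {T : BTree α // T ∈ L ∧ T.size = n} →
      {u // u ∈ treesOfNumNodesEq n} × List.Vector α n :=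
    fun T => (⟨bshape T.1, BinaryTree.mem_treesOfNumNodesEq.mpr (by exact (numNodes_bshape T.1).trans T.2.2)⟩,
              ⟨blabels T.1, by rw [blabels_length, T.2.2]⟩) with hfdef
  have hf : Function.Injective f := by
    intro S T h
    have h1 : bshape S.1 = bshape T.1 := congrArg (fun p => p.1.1) h
    have h2 : blabels S.1 = blabels T.1 := congrArg (fun p => p.2.1) h
    exact Subtype.ext (eq_of_bshape_blabels _ _ h1 h2)
  calc Nat.card {T : BTree α // T ∈ L ∧ T.size = n}
      ≤ Nat.card ({u // u ∈ treesOfNumNodesEq n} × List.Vector α n) :=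
        Nat.card_le_card_of_injective f hf
    _ = catalan n * Fintype.card α ^ n := by
        rw [Nat.card_eq_fintype_card, Fintype.card_prod, Fintype.card_coe,
          BinaryTree.treesOfNumNodesEq_card_eq_catalan, card_vector]

private lemma density_nonneg [Fintype α] (L : Set (BTree α)) (n : ℕ) : 0 ≤ density L n := by
  unfold density
  positivity

private lemma density_le_one [Fintype α] [Nonempty α] (L : Set (BTree α)) (n : ℕ) :
    density L n ≤ 1 := by
  have hA : (0:ℝ) < Fintype.card α := by exact_mod_cast Fintype.card_pos
  have hc : (0:ℝ) < catalan n := by exact_mod_cast catalan_pos' n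
  rw [density, div_le_one (by positivity)]
  calc (Nat.card {T : BTree α // T ∈ L ∧ T.size = n} : ℝ)
      ≤ ((catalan n * Fintype.card α ^ n : ℕ) : ℝ) := by exact_mod_cast nat_card_le L n
    _ = (catalan n : ℝ) * (Fintype.card α : ℝ) ^ n := by push_cast; ring

private lemma card_concL [Fintype α] (L : Set (BTree α)) (T : BTree α) (m : ℕ) :
    Nat.card {X : BTree α // X ∈ concL L T ∧ X.size = m + (T.size + 1)} =
      Fintype.card α * Nat.card {S : BTree α // S ∈ L ∧ S.size = m} := by
  rw [← Nat.card_eq_fintype_card (α := α), ← Nat.card_prod]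
  refine (Nat.card_congr (Equiv.ofBijective (fun p : α × {S : BTree α // S ∈ L ∧ S.size = m} =>
    (⟨BTree.node p.1 p.2.1 T, ⟨p.1, p.2.1, p.2.2.1, rfl⟩, by
      have h := p.2.2.2
      simp only [BTree.size, h]; omega⟩ :
      {X : BTree α // X ∈ concL L T ∧ X.size = m + (T.size + 1)})) ⟨?_, ?_⟩)).symm
  · rintro ⟨a, S, hS⟩ ⟨a', S', hS'⟩ h
    simp only [Subtype.mk.injEq, BTree.node.injEq] at h
    obtain ⟨rfl, rfl, -⟩ := h
    rfl
  · rintro ⟨X, hX⟩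
    obtain ⟨⟨a, S, hS, rfl⟩, hsz⟩ := hX
    have hS' : S.size = m := by simp only [BTree.size] at hsz; omega
    exact ⟨(a, ⟨S, hS, hS'⟩), rfl⟩

private lemma density_concL [Fintype α] [Nonempty α] (L : Set (BTree α)) (T : BTree α) (m : ℕ) :
    density (concL L T) (m + (T.size + 1)) =
      ((catalan m : ℝ) / (catalan (m + (T.size + 1)) : ℝ) / (Fintype.card α : ℝ) ^ T.size) *
        density L m := by
  have hA : (0:ℝ) < Fintype.card α := by exact_mod_cast Fintype.card_pos
  have hc1 : (0:ℝ) < catalan m := by exact_mod_cast catalan_pos' m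
  have hc2 : (0:ℝ) < catalan (m + (T.size + 1)) := by exact_mod_cast catalan_pos' _
  rw [density, density, card_concL]
  push_cast
  rw [pow_add, pow_add]
  field_simp

private lemma tendsto_catalan_ratio :
    Filter.Tendsto (fun n : ℕ => (catalan n : ℝ) / (catalan (n + 1) : ℝ))
      Filter.atTop (nhds (1/4)) := by
  have key : ∀ n : ℕ, (n + 2) * catalan (n + 1) = 2 * (2 * n + 1) * catalan n := by
    intro n
    have h1 : (n + 2) * catalan (n + 1) = Nat.centralBinom (n + 1) :=
      succ_mul_catalan_eq_centralBinom (n + 1)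
    have h2 := Nat.succ_mul_centralBinom_succ n
    have h3 := succ_mul_catalan_eq_centralBinom n
    have h4 : (n + 1) * ((n + 2) * catalan (n + 1)) = (n + 1) * (2 * (2 * n + 1) * catalan n) := by
      rw [h1, h2, ← h3]; ring
    exact Nat.eq_of_mul_eq_mul_left (Nat.succ_pos n) h4
  have heq : ∀ n : ℕ, (catalan n : ℝ) / (catalan (n + 1) : ℝ)
      = ((n : ℝ) + 2) / (2 * (2 * (n : ℝ) + 1)) := by
    intro n
    have hc2 : (0:ℝ) < (catalan (n + 1) : ℝ) := by exact_mod_cast catalan_pos' (n + 1)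
    have hd : (0:ℝ) < 2 * (2 * (n : ℝ) + 1) := by positivity
    rw [div_eq_div_iff hc2.ne' hd.ne']
    have k : ((n : ℝ) + 2) * (catalan (n + 1) : ℝ) = 2 * (2 * (n : ℝ) + 1) * (catalan n : ℝ) := by
      exact_mod_cast key n
    linear_combination -k
  have hlim : Filter.Tendsto (fun n : ℕ => (1 + 2 / (n : ℝ)) / (4 + 2 / (n : ℝ)))
      Filter.atTop (nhds ((1 + 0) / (4 + 0))) := by
    exact Filter.Tendsto.div (tendsto_const_nhds.add (tendsto_const_div_atTop_nhds_zero_nat 2))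
      (tendsto_const_nhds.add (tendsto_const_div_atTop_nhds_zero_nat 2)) (by norm_num)
  norm_num at hlim
  have : Filter.Tendsto (fun n : ℕ => ((n : ℝ) + 2) / (2 * (2 * (n : ℝ) + 1)))
      Filter.atTop (nhds (1/4)) := by
    apply hlim.congr'
    filter_upwards [Filter.eventually_ne_atTop 0] with n hn
    have hn' : (n : ℝ) ≠ 0 := Nat.cast_ne_zero.mpr hn
    rw [div_eq_div_iff (by positivity) (by positivity)]
    field_simp
    try ring
    try tauto
  exact this.congr (fun n => (heq n).symm)

private lemma tendsto_catalan_ratio_pow (k : ℕ) :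
    Filter.Tendsto (fun m : ℕ => (catalan m : ℝ) / (catalan (m + k) : ℝ))
      Filter.atTop (nhds ((1/4 : ℝ) ^ k)) := by
  induction k with
  | zero =>
    have h : (fun m : ℕ => (catalan m : ℝ) / (catalan (m + 0) : ℝ)) = fun _ => (1:ℝ) := by
      funext m
      rw [Nat.add_zero, div_self (by exact_mod_cast (catalan_pos' m).ne')]
    rw [h, pow_zero]
    exact tendsto_const_nhds
  | succ k ih =>
    have h2 : Filter.Tendsto (fun m : ℕ => (catalan (m + k) : ℝ) / (catalan (m + k + 1) : ℝ))
        Filter.atTop (nhds (1/4)) :=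
      tendsto_catalan_ratio.comp (Filter.tendsto_add_atTop_nat k)
    have hmul := ih.mul h2
    rw [← pow_succ]  at hmul
    apply hmul.congr
    intro m
    show (catalan m : ℝ) / (catalan (m + k) : ℝ) *
        ((catalan (m + k) : ℝ) / (catalan (m + k + 1) : ℝ))
      = (catalan m : ℝ) / (catalan (m + k + 1) : ℝ)
    have hne1 : (catalan (m + k) : ℝ) ≠ 0 := by exact_mod_cast (catalan_pos' (m + k)).ne'
    have hne2 : (catalan (m + k + 1) : ℝ) ≠ 0 := by
      exact_mod_cast (catalan_pos' (m + k + 1)).ne'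
    field_simp
    try ring

private lemma limsup_const_mul_of_nonneg {k : ℝ} (hk : 0 ≤ k) {f : ℕ → ℝ}
    (hb : Filter.IsBoundedUnder (· ≤ ·) Filter.atTop f)
    (hcb : Filter.IsCoboundedUnder (· ≤ ·) Filter.atTop f) :
    Filter.limsup (fun n => k * f n) Filter.atTop = k * Filter.limsup f Filter.atTop := by
  have hmono : Monotone (fun x : ℝ => k * x) := fun a b h => mul_le_mul_of_nonneg_left h hk
  exact (hmono.map_limsup_of_continuousAt f
    ((continuous_const.mul continuous_id).continuousAt) hb hcb).symm

private lemma limsup_tendsto_mul {ρ f : ℕ → ℝ} {c : ℝ} (hc : 0 < c)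
    (hρ : Filter.Tendsto ρ Filter.atTop (nhds c)) (hf0 : ∀ n, 0 ≤ f n) (hf1 : ∀ n, f n ≤ 1) :
    Filter.limsup (fun n => ρ n * f n) Filter.atTop = c * Filter.limsup f Filter.atTop := by
  have hbdd_f : Filter.IsBoundedUnder (· ≤ ·) Filter.atTop f :=
    ⟨1, Filter.eventually_map.2 (Filter.Eventually.of_forall hf1)⟩
  have hcob_f : Filter.IsCoboundedUnder (· ≤ ·) Filter.atTop f :=
    Filter.isCoboundedUnder_le_of_le Filter.atTop hf0
  set ℓ := Filter.limsup f Filter.atTop with hℓdef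
  have hℓ0 : 0 ≤ ℓ :=
    Filter.le_limsup_of_frequently_le (Filter.Frequently.of_forall hf0) hbdd_f
  have hℓ1 : ℓ ≤ 1 := Filter.limsup_le_of_le hcob_f (Filter.Eventually.of_forall hf1)
  have hρpos : ∀ᶠ n in Filter.atTop, 0 ≤ ρ n := hρ.eventually (eventually_ge_nhds hc)
  have hρf_nonneg : ∀ᶠ n in Filter.atTop, 0 ≤ ρ n * f n := by
    filter_upwards [hρpos] with n hn
    exact mul_nonneg hn (hf0 n)
  have hcob_ρf : Filter.IsCoboundedUnder (· ≤ ·) Filter.atTop (fun n => ρ n * f n) :=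
    Filter.isCoboundedUnder_le_of_eventually_le Filter.atTop hρf_nonneg
  have hbdd_ρf : Filter.IsBoundedUnder (· ≤ ·) Filter.atTop (fun n => ρ n * f n) := by
    refine ⟨c + 1, Filter.eventually_map.2 ?_⟩
    filter_upwards [hρ.eventually (eventually_le_nhds (lt_add_one c)), hρpos] with n hn hn0
    calc ρ n * f n ≤ ρ n * 1 := mul_le_mul_of_nonneg_left (hf1 n) hn0
      _ ≤ c + 1 := by rw [mul_one]; exact hn
  have upper : ∀ ε : ℝ, 0 < ε →
      Filter.limsup (fun n => ρ n * f n) Filter.atTop ≤ (c + ε) * ℓ := by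
    intro ε hε
    have hev : ∀ᶠ n in Filter.atTop, ρ n * f n ≤ (c + ε) * f n := by
      filter_upwards [hρ.eventually (eventually_le_nhds (lt_add_of_pos_right c hε))] with n hn
      exact mul_le_mul_of_nonneg_right hn (hf0 n)
    have hbdd' : Filter.IsBoundedUnder (· ≤ ·) Filter.atTop (fun n => (c + ε) * f n) :=
      ⟨(c + ε), Filter.eventually_map.2 (Filter.Eventually.of_forall fun n =>
        mul_le_of_le_one_right (by linarith) (hf1 n))⟩
    calc Filter.limsup (fun n => ρ n * f n) Filter.atTop
        ≤ Filter.limsup (fun n => (c + ε) * f n) Filter.atTop :=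
          Filter.limsup_le_limsup hev hcob_ρf hbdd'
      _ = (c + ε) * ℓ := limsup_const_mul_of_nonneg (by linarith) hbdd_f hcob_f
  have lower : ∀ ε : ℝ, 0 < ε → ε < c →
      (c - ε) * ℓ ≤ Filter.limsup (fun n => ρ n * f n) Filter.atTop := by
    intro ε hε hεc
    have hev : ∀ᶠ n in Filter.atTop, (c - ε) * f n ≤ ρ n * f n := by
      filter_upwards [hρ.eventually (eventually_ge_nhds (by linarith : c - ε < c))] with n hn
      exact mul_le_mul_of_nonneg_right hn (hf0 n)
    have hcob' : Filter.IsCoboundedUnder (· ≤ ·) Filter.atTop (fun n => (c - ε) * f n) :=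
      Filter.isCoboundedUnder_le_of_le Filter.atTop
        (fun n => mul_nonneg (by linarith) (hf0 n))
    calc (c - ε) * ℓ
        = Filter.limsup (fun n => (c - ε) * f n) Filter.atTop :=
          (limsup_const_mul_of_nonneg (by linarith) hbdd_f hcob_f).symm
      _ ≤ Filter.limsup (fun n => ρ n * f n) Filter.atTop :=
          Filter.limsup_le_limsup hev hcob' hbdd_ρf
  apply le_antisymm
  · apply le_of_forall_pos_le_add
    intro ε hε
    have h1 := upper ε hε
    have h2 : ε * ℓ ≤ ε := mul_le_of_le_one_right hε.le hℓ1
    have h3 : (c + ε) * ℓ = c * ℓ + ε * ℓ := by ring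
    linarith
  · apply le_of_forall_pos_le_add
    intro ε hε
    set m := min (c/2) ε with hmdef
    have hm0 : 0 < m := lt_min (by linarith) hε
    have hmc : m < c := lt_of_le_of_lt (min_le_left _ _) (by linarith)
    have h1 := lower m hm0 hmc
    have h2 : m * ℓ ≤ ε := le_trans (mul_le_of_le_one_right hm0.le hℓ1) (min_le_right _ _)
    have h3 : (c - m) * ℓ = c * ℓ - m * ℓ := by ring
    linarith

end UpperDensityConcL

theorem upperDensity_concL {α : Type*} [Fintype α] [Nonempty α]
    (L : Set (BTree α)) (T : BTree α) :
    upperDensity (concL L T) =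
      1 / ((Fintype.card α : ℝ) ^ T.size * 4 ^ (T.size + 1)) * upperDensity L := by
  have hA : (0:ℝ) < Fintype.card α := by exact_mod_cast Fintype.card_pos
  set t := T.size with htdef
  have hshift : upperDensity (concL L T) =
      Filter.limsup ((density (concL L T)) ∘ (fun m => m + (t + 1))) Filter.atTop := by
    rw [upperDensity, Filter.limsup_comp, Filter.map_add_atTop_eq_nat]
  have hρ : Filter.Tendsto
      (fun m : ℕ => (catalan m : ℝ) / (catalan (m + (t + 1)) : ℝ) / (Fintype.card α : ℝ) ^ t)
      Filter.atTop (nhds ((1/4 : ℝ) ^ (t + 1) / (Fintype.card α : ℝ) ^ t)) :=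
    (tendsto_catalan_ratio_pow (t + 1)).div_const _
  have hc : (0:ℝ) < (1/4 : ℝ) ^ (t + 1) / (Fintype.card α : ℝ) ^ t := by positivity
  have heq : (density (concL L T)) ∘ (fun m => m + (t + 1)) =
      fun m => ((catalan m : ℝ) / (catalan (m + (t + 1)) : ℝ) / (Fintype.card α : ℝ) ^ t) *
        density L m := funext fun m => density_concL L T m
  rw [hshift, heq, limsup_tendsto_mul hc hρ (fun n => density_nonneg L n)
    (fun n => density_le_one L n), upperDensity]
  congr 1
  rw [div_pow, one_pow, div_div, mul_comm]

end Sparse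
end

section
/- For every regular tree language L ⊆ ℬ^Σ over a finite nonempty alphabet Σ there exists n ∈ ℕ such that for all trees S ∈ ℬ^Σ and T ∈ L with S ⪯ T there exist k ≤ n and trees T_1,…,T_k ∈ ℬ^Σ each of size strictly less than 2^n such that S ∈ L[T_k,…,T_1]^{-1}. -/
open Filter Topology

namespace Sparse

variable {α : Type*}

/-- A monotone sequence of subsets of a finite type stabilizes within `Nat.card X` steps. -/
lemma stabilize {X : Type*} [Finite X] (f : ℕ → Set X) (hf : ∀ k, f k ⊆ f (k + 1)) :
    ∃ k ≤ Nat.card X, f k = f (k + 1) := by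
  by_contra h
  push_neg at h
  have hstrict : ∀ k ≤ Nat.card X, f k ⊂ f (k + 1) := fun k hk =>
    ssubset_iff_subset_ne.mpr ⟨hf k, h k hk⟩
  have hcard : ∀ k, k ≤ Nat.card X + 1 → k ≤ (f k).ncard := by
    intro k
    induction k with
    | zero => intro _; exact Nat.zero_le _
    | succ m ih =>
      intro hm
      have h1 : m ≤ (f m).ncard := ih (by omega)
      have h2 : (f m).ncard < (f (m + 1)).ncard :=
        Set.ncard_lt_ncard (hstrict m (by omega)) (Set.toFinite _)
      omega
  have h3 := hcard (Nat.card X + 1) le_rfl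
  have hle : (f (Nat.card X + 1)).ncard ≤ Nat.card X := by
    have := Set.ncard_le_ncard (Set.subset_univ (f (Nat.card X + 1))) (Set.toFinite _)
    simpa [Set.ncard_univ] using this
  omega

/-- Every run value is realized by a tree of size `< 2 ^ |Q|`. -/
lemma small_witness {Q : Type} [Fintype Q] (Δ : Option Q → Option Q → α → Q → Prop)
    (T : BTree α) (q : Option Q) (hT : Run Δ T q) :
    ∃ T' : BTree α, T'.size < 2 ^ Fintype.card Q ∧ Run Δ T' q := by
  classical
  set g : ℕ → Set Q := fun k => {q : Q | ∃ T : BTree α, T.size < 2 ^ k ∧ Run Δ T (some q)}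
    with hg
  have hmono : ∀ j k, j ≤ k → g j ⊆ g k := by
    intro j k hjk q ⟨T, hsz, hrun⟩
    exact ⟨T, lt_of_lt_of_le hsz (Nat.pow_le_pow_right (by norm_num) hjk), hrun⟩
  obtain ⟨k0, hk0le, hk0⟩ := stabilize g (fun k => hmono k (k + 1) (Nat.le_succ k))
  rw [Nat.card_eq_fintype_card] at hk0le
  -- every reachable state is in `g k0`
  have key : ∀ (T : BTree α) (q : Q), Run Δ T (some q) → q ∈ g k0 := by
    intro T
    induction T with
    | nil => intro q hrun; cases hrun
    | node a l r ihl ihr =>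
      intro q hrun
      cases hrun with
      | node hl hr hΔ =>
        rename_i ql qr
        have hpos : 0 < 2 ^ k0 := Nat.pow_pos (by norm_num)
        have hL : ∃ l' : BTree α, l'.size < 2 ^ k0 ∧ Run Δ l' ql := by
          cases ql with
          | none => cases hl; exact ⟨BTree.nil, hpos, Run.nil⟩
          | some p => obtain ⟨l', h1, h2⟩ := ihl p hl; exact ⟨l', h1, h2⟩
        have hR : ∃ r' : BTree α, r'.size < 2 ^ k0 ∧ Run Δ r' qr := by
          cases qr with
          | none => cases hr; exact ⟨BTree.nil, hpos, Run.nil⟩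
          | some p => obtain ⟨r', h1, h2⟩ := ihr p hr; exact ⟨r', h1, h2⟩
        obtain ⟨l', hl1, hl2⟩ := hL
        obtain ⟨r', hr1, hr2⟩ := hR
        have hmem : q ∈ g (k0 + 1) := by
          refine ⟨BTree.node a l' r', ?_, Run.node hl2 hr2 hΔ⟩
          have : (2 : ℕ) ^ (k0 + 1) = 2 ^ k0 + 2 ^ k0 := by ring
          simp only [BTree.size]
          omega
        rwa [hk0]
  cases q with
  | none =>
    cases hT
    exact ⟨BTree.nil, Nat.pow_pos (by norm_num), Run.nil⟩
  | some q =>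
    obtain ⟨T', h1, h2⟩ := hmono k0 (Fintype.card Q) hk0le (key T q hT)
    exact ⟨T', h1, h2⟩

/-- For every regular tree language `L` there is `n` such that whenever
`S ⪯ T ∈ L`, there are `k ≤ n` trees `T_k, …, T_1`, each of size `< 2^n`, with
`S ∈ L[T_k,…,T_1]⁻¹` (the list `Ts = [T_k, …, T_1]`). -/
theorem subtree_mem_quotIter_of_regular {α : Type*} [Fintype α] [Nonempty α]
    (L : Set (BTree α)) (hL : RegularTreeLang L) :
    ∃ n : ℕ, ∀ S T : BTree α, T ∈ L → BTree.Subtree S T →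
      ∃ Ts : List (BTree α), Ts.length ≤ n ∧ (∀ T' ∈ Ts, T'.size < 2 ^ n) ∧
        S ∈ quotIter L Ts := by
  classical
  obtain ⟨Q, hQfin, Δ, F, hL⟩ := hL
  haveI := hQfin
  set c := Fintype.card Q with hc
  refine ⟨c + 1, ?_⟩
  intro S T hT hsub
  -- `D k` : run values from which acceptance is reachable by a context of length `≤ k`
  -- built from trees of size `< 2 ^ c`.
  set D : ℕ → Set (Option Q) := fun k =>
    {q | ∃ Ts : List (BTree α), Ts.length ≤ k ∧ (∀ T' ∈ Ts, T'.size < 2 ^ c) ∧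
      ∀ S' : BTree α, Run Δ S' q → S' ∈ quotIter L Ts} with hD
  have hDmono : ∀ j k, j ≤ k → D j ⊆ D k := by
    intro j k hjk q ⟨Ts, h1, h2, h3⟩
    exact ⟨Ts, h1.trans hjk, h2, h3⟩
  obtain ⟨k1, hk1le, hk1⟩ := stabilize D (fun k => hDmono k (k + 1) (Nat.le_succ k))
  have hcardO : Nat.card (Option Q) = c + 1 := by
    simp [Nat.card_eq_fintype_card, hc]
  rw [hcardO] at hk1le
  -- one step of the context
  have hstepL : ∀ (a : α) (ql qr : Option Q) (qT : Q), Δ ql qr a qT →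
      (∃ Tr : BTree α, Run Δ Tr qr) → some qT ∈ D k1 → ql ∈ D k1 := by
    intro a ql qr qT hΔ ⟨Tr, hTr⟩ ⟨Ts, hlen, hsz, hmem⟩
    obtain ⟨r'', hr''sz, hr''⟩ := small_witness Δ Tr qr hTr
    rw [hk1]
    refine ⟨r'' :: Ts, by simpa using hlen, ?_, ?_⟩
    · intro T' hT'
      rcases List.mem_cons.mp hT' with h | h
      · exact h ▸ hr''sz
      · exact hsz T' h
    · intro S' hS'
      have : BTree.node a S' r'' ∈ quotIter L Ts := hmem _ (Run.node hS' hr'' hΔ)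
      exact Or.inl ⟨a, this⟩
  have hstepR : ∀ (a : α) (ql qr : Option Q) (qT : Q), Δ ql qr a qT →
      (∃ Tl : BTree α, Run Δ Tl ql) → some qT ∈ D k1 → qr ∈ D k1 := by
    intro a ql qr qT hΔ ⟨Tl, hTl⟩ ⟨Ts, hlen, hsz, hmem⟩
    obtain ⟨l'', hl''sz, hl''⟩ := small_witness Δ Tl ql hTl
    rw [hk1]
    refine ⟨l'' :: Ts, by simpa using hlen, ?_, ?_⟩
    · intro T' hT'
      rcases List.mem_cons.mp hT' with h | h
      · exact h ▸ hl''sz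
      · exact hsz T' h
    · intro S' hS'
      have : BTree.node a l'' S' ∈ quotIter L Ts := hmem _ (Run.node hl'' hS' hΔ)
      exact Or.inr ⟨a, this⟩
  -- walk down from `T` to `S`
  have hmain : ∀ S T : BTree α, BTree.Subtree S T → ∀ q : Option Q, Run Δ T q →
      q ∈ D k1 → ∃ q' : Option Q, Run Δ S q' ∧ q' ∈ D k1 := by
    intro S T hsub
    induction hsub with
    | refl => exact fun q hrun hq => ⟨q, hrun, hq⟩
    | left _ ih =>
      intro q hrun hq
      cases hrun with
      | node hl hr hΔ =>
        rename_i ql qr qT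
        exact ih ql hl (hstepL _ ql qr qT hΔ ⟨_, hr⟩ hq)
    | right _ ih =>
      intro q hrun hq
      cases hrun with
      | node hl hr hΔ =>
        rename_i ql qr qT
        exact ih qr hr (hstepR _ ql qr qT hΔ ⟨_, hl⟩ hq)
  -- the accepting run on `T`
  rw [hL] at hT
  obtain ⟨qf, hqf, hrunT⟩ := hT
  have hbase : some qf ∈ D 0 := by
    refine ⟨[], le_rfl, by simp, ?_⟩
    intro S' hS'
    rw [hL]
    exact ⟨qf, hqf, hS'⟩
  obtain ⟨q, hSrun, Ts, hlen, hsz, hmem⟩ :=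
    hmain S T hsub (some qf) hrunT (hDmono 0 k1 (Nat.zero_le _) hbase)
  refine ⟨Ts, hlen.trans hk1le, ?_, hmem S hSrun⟩
  intro T' hT'
  exact lt_of_lt_of_le (hsz T' hT') (Nat.pow_le_pow_right (by norm_num) (Nat.le_succ c))

end Sparse
end

section
/- Let Σ be a finite nonempty alphabet, L ⊆ ℬ^Σ and T ∈ ℬ^Σ. Then under the random binary search tree distribution, lim_{n→∞} Prob^bst_n(LT ∩ ℬ^Σ_n) = 0; in fact Prob^bst_n(LT ∩ ℬ^Σ_n) ≤ 1/n for all n > 1 + |T|. -/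
open Filter Topology

namespace Sparse

variable {α : Type*}

/-- The probability of the tree `T` under the random binary search tree distribution on trees
of its size: `Prob^bst(nil) = 1`, single-node trees get probability `1/|Σ|`, and
`Prob^bst(conc_a(l,r)) = (1/(n·|Σ|))·Prob^bst(l)·Prob^bst(r)` where `n` is the total size. -/
noncomputable def probBst [Fintype α] : BTree α → ℝ
  | BTree.nil => 1
  | BTree.node _ l r =>
      (1 / (((l.size + r.size + 1 : ℕ) : ℝ) * (Fintype.card α : ℝ))) * probBst l * probBst r

/-- `Prob^bst_n(M)`: the probability of the set of `n`-node trees in `M` under the random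
binary search tree distribution. -/
noncomputable def bstProb [Fintype α] (n : ℕ) (M : Set (BTree α)) : ℝ :=
  ∑' T : {T : BTree α // T ∈ M ∧ T.size = n}, probBst T.1

def encode : BTree α → List (Option α)
  | .nil => [none]
  | .node a l r => some a :: (encode l ++ encode r)

lemma encode_append_inj : ∀ (T1 T2 : BTree α) (s1 s2 : List (Option α)),
    encode T1 ++ s1 = encode T2 ++ s2 → T1 = T2 ∧ s1 = s2 := by
  intro T1
  induction T1 with
  | nil =>
    intro T2 s1 s2 h
    cases T2 with
    | nil => simpa [encode] using h
    | node a l r => simp [encode] at h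
  | node a l r ihl ihr =>
    intro T2 s1 s2 h
    cases T2 with
    | nil => simp [encode] at h
    | node a' l' r' =>
      simp only [encode, List.cons_append, List.cons.injEq, Option.some.injEq,
        List.append_assoc] at h
      obtain ⟨ha, h⟩ := h
      obtain ⟨hl, h⟩ := ihl l' _ _ h
      obtain ⟨hr, h⟩ := ihr r' _ _ h
      exact ⟨by rw [ha, hl, hr], h⟩

lemma encode_injective : Function.Injective (encode (α := α)) := by
  intro T1 T2 h
  have := encode_append_inj T1 T2 [] [] (by simp [h])
  exact this.1

lemma encode_length (T : BTree α) : (encode T).length = 2 * T.size + 1 := by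
  induction T with
  | nil => simp [encode, BTree.size]
  | node a l r ihl ihr => simp [encode, BTree.size, ihl, ihr]; omega

instance finite_size [Fintype α] (n : ℕ) : Finite {T : BTree α // T.size = n} := by
  apply Finite.of_injective (β := List.Vector (Option α) (2*n+1))
    (fun T => ⟨encode T.1, by rw [encode_length, T.2]⟩)
  intro T1 T2 h
  exact Subtype.ext (encode_injective (congrArg Subtype.val h))

instance finite_mem_size [Fintype α] (M : Set (BTree α)) (n : ℕ) :
    Finite {T : BTree α // T ∈ M ∧ T.size = n} := by
  apply Finite.of_injective
    (fun T => (⟨T.1, T.2.2⟩ : {T : BTree α // T.size = n}))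
  intro T1 T2 h
  simp only [Subtype.mk.injEq] at h
  exact Subtype.ext h

lemma probBst_nonneg [Fintype α] (T : BTree α) : 0 ≤ probBst T := by
  induction T with
  | nil => simp [probBst]
  | node a l r ihl ihr =>
    apply mul_nonneg (mul_nonneg _ ihl) ihr
    positivity

lemma probBst_le_one [Fintype α] (T : BTree α) : probBst T ≤ 1 := by
  induction T with
  | nil => simp [probBst]
  | node a l r ihl ihr =>
    have hc : (1:ℝ) ≤ (Fintype.card α : ℝ) ∨ probBst (BTree.node a l r) = 0 := by
      rcases Nat.eq_zero_or_pos (Fintype.card α) with h | h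
      · right; simp [probBst, h]
      · left; exact_mod_cast h
    rcases hc with hc | hc
    · have h1 : (1:ℝ) ≤ ((l.size + r.size + 1 : ℕ) : ℝ) * (Fintype.card α : ℝ) := by
        have : (1:ℝ) ≤ ((l.size + r.size + 1 : ℕ) : ℝ) := by exact_mod_cast Nat.one_le_iff_ne_zero.2 (by omega)
        nlinarith
      calc probBst (BTree.node a l r)
          = (1 / (((l.size + r.size + 1 : ℕ) : ℝ) * (Fintype.card α : ℝ))) * probBst l * probBst r := rfl
        _ ≤ 1 := by
            have h2 : 1 / (((l.size + r.size + 1 : ℕ) : ℝ) * (Fintype.card α : ℝ)) ≤ 1 := by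
              rw [div_le_one (by linarith)]; linarith
            have hlr : probBst l * probBst r ≤ 1 :=
              mul_le_one₀ ihl (probBst_nonneg r) ihr
            rw [mul_assoc]
            exact mul_le_one₀ h2 (mul_nonneg (probBst_nonneg l) (probBst_nonneg r)) hlr
    · rw [hc]; norm_num

/-- key lemma: sum of probBst over all trees of a given size is at most 1 -/
lemma sum_probBst_le_one [Fintype α] [Nonempty α] (n : ℕ) :
    (∑' T : {T : BTree α // T.size = n}, probBst T.1) ≤ 1 := by
  induction n using Nat.strong_induction_on with
  | _ n ih =>
    match n with
    | 0 =>
      have hu : Unique {T : BTree α // T.size = 0} := by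
        refine ⟨⟨⟨BTree.nil, rfl⟩⟩, ?_⟩
        rintro ⟨T, hT⟩
        cases T with
        | nil => rfl
        | node a l r => simp [BTree.size] at hT
      rw [tsum_eq_single (hu.default)]
      · exact probBst_le_one _
      · intro b hb; exact absurd (hu.uniq b) hb
    | (k+1) =>
      classical
      set c0 : ℝ := 1 / (((k+1 : ℕ) : ℝ) * (Fintype.card α : ℝ)) with hc0
      let β : Type _ := α × Σ j : Fin (k+1), {l : BTree α // l.size = j.1} × {r : BTree α // r.size = k - j.1}
      let g : β → {T : BTree α // T.size = k+1} := fun x =>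
        ⟨BTree.node x.1 x.2.2.1.1 x.2.2.2.1, by
          have h1 := x.2.2.1.2
          have h2 := x.2.2.2.2
          have h3 := x.2.1.2
          simp only [BTree.size, h1, h2]
          omega⟩
      have hg : Function.Bijective g := by
        constructor
        · rintro ⟨a1, j1, l1, r1⟩ ⟨a2, j2, l2, r2⟩ h
          simp only [g, Subtype.mk.injEq, BTree.node.injEq] at h
          obtain ⟨ha, hl, hr⟩ := h
          have hj : j1 = j2 := Fin.ext (by rw [← l1.2, ← l2.2, hl])
          subst ha hj
          have hl' : l1 = l2 := Subtype.ext hl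
          have hr' : r1 = r2 := Subtype.ext hr
          subst hl' hr'
          rfl
        · rintro ⟨T, hT⟩
          cases T with
          | nil => simp [BTree.size] at hT
          | node a l r =>
            simp only [BTree.size] at hT
            refine ⟨⟨a, ⟨⟨l.size, by omega⟩, ⟨l, rfl⟩, ⟨r, by show r.size = k - l.size; omega⟩⟩⟩, rfl⟩
      have he := (Equiv.ofBijective g hg).tsum_eq (fun T : {T : BTree α // T.size = k+1} => probBst T.1)
      rw [← he]
      have hval : ∀ x : β, probBst ((Equiv.ofBijective g hg) x).1 = c0 * (probBst x.2.2.1.1 * probBst x.2.2.2.1) := by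
        rintro ⟨a, j, l, r⟩
        have h1 : l.1.size + r.1.size + 1 = k + 1 := by
          have := l.2; have := r.2; have := j.2; omega
        show probBst (BTree.node a l.1 r.1) = _
        rw [probBst, h1, hc0]
        ring
      letI : ∀ m : ℕ, Fintype {T : BTree α // T.size = m} := fun m => Fintype.ofFinite _
      have hsum : ∀ m : ℕ, m < k + 1 → (∑ T : {T : BTree α // T.size = m}, probBst T.1) ≤ 1 := by
        intro m hm
        rw [← tsum_fintype (L := SummationFilter.unconditional _)]
        exact ih m hm
      have hnonneg : ∀ m : ℕ, (0:ℝ) ≤ ∑ T : {T : BTree α // T.size = m}, probBst T.1 :=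
        fun m => Finset.sum_nonneg fun T _ => probBst_nonneg T.1
      have hc0nn : 0 ≤ c0 := by positivity
      calc (∑' x : β, probBst ((Equiv.ofBijective g hg) x).1)
          = ∑ x : β, probBst ((Equiv.ofBijective g hg) x).1 := tsum_fintype _
        _ = ∑ a : α, ∑ j : Fin (k+1), ∑ l : {l : BTree α // l.size = j.1},
              ∑ r : {r : BTree α // r.size = k - j.1}, c0 * (probBst l.1 * probBst r.1) := by
            simp only [hval]
            rw [Fintype.sum_prod_type]
            congr 1
            funext a
            rw [← Finset.univ_sigma_univ, Finset.sum_sigma]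
            congr 1
            funext j
            rw [Fintype.sum_prod_type]
        _ ≤ ∑ _a : α, ∑ _j : Fin (k+1), c0 := by
            apply Finset.sum_le_sum
            intro a _
            apply Finset.sum_le_sum
            intro j _
            have h1 := hsum j.1 (by omega)
            have h2 := hsum (k - j.1) (by omega)
            have h3 := hnonneg j.1
            have h4 := hnonneg (k - j.1)
            calc ∑ l : {l : BTree α // l.size = j.1},
                  ∑ r : {r : BTree α // r.size = k - j.1}, c0 * (probBst l.1 * probBst r.1)
                = c0 * ((∑ l : {l : BTree α // l.size = j.1}, probBst l.1) *
                    (∑ r : {r : BTree α // r.size = k - j.1}, probBst r.1)) := by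
                  rw [Finset.sum_mul_sum]
                  rw [Finset.mul_sum]
                  congr 1
                  funext l
                  rw [Finset.mul_sum]
              _ ≤ c0 * 1 := by
                  apply mul_le_mul_of_nonneg_left _ hc0nn
                  exact mul_le_one₀ h1 h4 h2
              _ = c0 := mul_one c0
        _ = (Fintype.card α : ℝ) * ((k+1 : ℕ) * c0) := by
            simp [Finset.sum_const, Finset.card_univ, mul_assoc]
        _ = 1 := by
            rw [hc0]
            have hca : 0 < (Fintype.card α : ℝ) := by
              exact_mod_cast Fintype.card_pos
            have hk : 0 < ((k+1 : ℕ) : ℝ) := by positivity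
            field_simp


lemma sum_mem_probBst_le_one [Fintype α] [Nonempty α] (M : Set (BTree α)) (m : ℕ) :
    (∑' S : {S : BTree α // S ∈ M ∧ S.size = m}, probBst S.1) ≤ 1 := by
  refine le_trans (Summable.tsum_le_tsum_of_inj
    (fun S : {S : BTree α // S ∈ M ∧ S.size = m} => (⟨S.1, S.2.2⟩ : {S : BTree α // S.size = m}))
    ?_ (fun c _ => probBst_nonneg c.1) (fun a => le_refl _) Summable.of_finite Summable.of_finite)
    (sum_probBst_le_one m)
  intro S1 S2 h
  simp only [Subtype.mk.injEq] at h
  exact Subtype.ext h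

lemma bstProb_nonneg [Fintype α] (n : ℕ) (M : Set (BTree α)) : 0 ≤ bstProb n M :=
  tsum_nonneg fun T => probBst_nonneg T.1

lemma bstProb_concL_le [Fintype α] [Nonempty α] (L : Set (BTree α)) (T : BTree α)
    (n : ℕ) (hn : 1 + T.size < n) : bstProb n (concL L T) ≤ 1 / (n : ℝ) := by
  classical
  set m := n - 1 - T.size with hm
  set c : ℝ := (Fintype.card α : ℝ) with hc
  have hca : 0 < c := by rw [hc]; exact_mod_cast Fintype.card_pos
  have hnpos : 0 < (n : ℝ) := by exact_mod_cast Nat.pos_of_ne_zero (by omega)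
  let g : α × {S : BTree α // S ∈ L ∧ S.size = m} → {X : BTree α // X ∈ concL L T ∧ X.size = n} :=
    fun x => ⟨BTree.node x.1 x.2.1 T, ⟨⟨x.1, x.2.1, x.2.2.1, rfl⟩, by
      have := x.2.2.2
      simp only [BTree.size]
      omega⟩⟩
  have hg : Function.Bijective g := by
    constructor
    · rintro ⟨a1, S1⟩ ⟨a2, S2⟩ h
      simp only [g, Subtype.mk.injEq, BTree.node.injEq] at h
      obtain ⟨ha, hS, -⟩ := h
      exact Prod.ext ha (Subtype.ext hS)
    · rintro ⟨X, hX, hsize⟩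
      obtain ⟨a, S, hS, rfl⟩ := hX
      simp only [BTree.size] at hsize
      refine ⟨(a, ⟨S, hS, by omega⟩), rfl⟩
  have he := (Equiv.ofBijective g hg).tsum_eq
    (fun X : {X : BTree α // X ∈ concL L T ∧ X.size = n} => probBst X.1)
  rw [bstProb, ← he]
  have hval : ∀ x : α × {S : BTree α // S ∈ L ∧ S.size = m},
      probBst ((Equiv.ofBijective g hg) x).1 = (1 / ((n : ℝ) * c)) * probBst x.2.1 * probBst T := by
    rintro ⟨a, S⟩
    have h1 : S.1.size + T.size + 1 = n := by have := S.2.2; omega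
    show probBst (BTree.node a S.1 T) = _
    rw [probBst, h1]
  letI : Fintype {S : BTree α // S ∈ L ∧ S.size = m} := Fintype.ofFinite _
  have hSsum : (∑ S : {S : BTree α // S ∈ L ∧ S.size = m}, probBst S.1) ≤ 1 := by
    rw [← tsum_fintype (L := SummationFilter.unconditional _)]
    exact sum_mem_probBst_le_one L m
  have hSnn : (0:ℝ) ≤ ∑ S : {S : BTree α // S ∈ L ∧ S.size = m}, probBst S.1 :=
    Finset.sum_nonneg fun S _ => probBst_nonneg S.1
  have hcoef : (0:ℝ) ≤ 1 / ((n : ℝ) * c) := by positivity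
  calc (∑' x : α × {S : BTree α // S ∈ L ∧ S.size = m}, probBst ((Equiv.ofBijective g hg) x).1)
      = ∑ x : α × {S : BTree α // S ∈ L ∧ S.size = m}, probBst ((Equiv.ofBijective g hg) x).1 :=
        tsum_fintype _
    _ = ∑ _a : α, ∑ S : {S : BTree α // S ∈ L ∧ S.size = m},
          (1 / ((n : ℝ) * c)) * probBst S.1 * probBst T := by
        simp only [hval]
        rw [Fintype.sum_prod_type]
    _ ≤ ∑ _a : α, 1 / ((n : ℝ) * c) := by
        apply Finset.sum_le_sum
        intro a _
        calc (∑ S : {S : BTree α // S ∈ L ∧ S.size = m},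
              (1 / ((n : ℝ) * c)) * probBst S.1 * probBst T)
            = (1 / ((n : ℝ) * c)) * probBst T *
                (∑ S : {S : BTree α // S ∈ L ∧ S.size = m}, probBst S.1) := by
              rw [Finset.mul_sum]
              congr 1
              funext S
              ring
          _ ≤ 1 / ((n : ℝ) * c) := by
              rw [mul_assoc]
              have h1 : probBst T * (∑ S : {S : BTree α // S ∈ L ∧ S.size = m}, probBst S.1) ≤ 1 :=
                mul_le_one₀ (probBst_le_one T) hSnn hSsum
              simpa using mul_le_mul_of_nonneg_left h1 hcoef
    _ = c * (1 / ((n : ℝ) * c)) := by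
        simp [Finset.sum_const, Finset.card_univ, hc]
    _ = 1 / (n : ℝ) := by
        field_simp


/-- Under the random binary search tree distribution,
`Prob^bst_n(LT ∩ ℬ^Σ_n) → 0`; in fact `Prob^bst_n(LT ∩ ℬ^Σ_n) ≤ 1/n` for all `n > 1 + |T|`. -/
theorem bst_concL_sparse {α : Type*} [Fintype α] [Nonempty α]
    (L : Set (BTree α)) (T : BTree α) :
    Tendsto (fun n => bstProb n (concL L T)) atTop (𝓝 0) ∧
    ∀ n : ℕ, 1 + T.size < n → bstProb n (concL L T) ≤ 1 / (n : ℝ) := by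
  refine ⟨?_, fun n hn => bstProb_concL_le L T n hn⟩
  apply tendsto_of_tendsto_of_tendsto_of_le_of_le' tendsto_const_nhds
    tendsto_one_div_atTop_nhds_zero_nat
  · exact Eventually.of_forall fun n => bstProb_nonneg n (concL L T)
  · filter_upwards [eventually_gt_atTop (1 + T.size)] with n hn
    exact bstProb_concL_le L T n hn

end Sparse
end
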